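/- For every t ∈ ℂ with t ≠ 0, the bracket on ℂ⁴ given by [e₁,e₂] = e₃, [e₂,e₁] = −e₃, [e₁,e₃] = −e₂, [e₃,e₁] = e₂, [e₂,e₃] = e₄ + t·e₁, [e₃,e₂] = −e₄ − t·e₁ (the deformation of the diamond Lie algebra 𝔡 along the 2-cocycle φ₂(e₂,e₃) = e₁, φ₂(e₃,e₂) = −e₁) is isomorphic to the Lie algebra sl(2,ℂ) ⊕ ℂ on ℂ⁴ with bracket [e₁,e₂] = e₃, [e₂,e₁] = −e₃, [e₂,e₃] = 2e₂, [e₃,e₂] = −2e₂, [e₁,e₃] = −2e₁, [e₃,e₁] = 2e₁, and all brackets involving e₄ equal to zero. -/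

import Mathlib

/-- The deformation of the diamond Lie algebra on `ℂ⁴` along the 2-cocycle
`φ₂(e₂,e₃) = e₁`, `φ₂(e₃,e₂) = -e₁`: the brackets `[e₁,e₂] = e₃`,
`[e₂,e₁] = -e₃`, `[e₁,e₃] = -e₂`, `[e₃,e₁] = e₂`, `[e₂,e₃] = e₄ + t·e₁`,
`[e₃,e₂] = -e₄ - t·e₁`, in coordinates. -/
def diamondDeformed2 (t : ℂ) (x y : Fin 4 → ℂ) : Fin 4 → ℂ :=
  ![t * (x 1 * y 2 - x 2 * y 1),
    x 2 * y 0 - x 0 * y 2,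
    x 0 * y 1 - x 1 * y 0,
    x 1 * y 2 - x 2 * y 1]

/-- The bracket of the Lie algebra `sl(2,ℂ) ⊕ ℂ` on `ℂ⁴`: `[e₁,e₂] = e₃`,
`[e₂,e₁] = -e₃`, `[e₂,e₃] = 2e₂`, `[e₃,e₂] = -2e₂`, `[e₁,e₃] = -2e₁`,
`[e₃,e₁] = 2e₁`, all brackets involving `e₄` zero, in coordinates. -/
def sl2PlusCBracket (x y : Fin 4 → ℂ) : Fin 4 → ℂ :=
  ![2 * (x 2 * y 0 - x 0 * y 2),
    2 * (x 1 * y 2 - x 2 * y 1),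
    x 0 * y 1 - x 1 * y 0,
    0]

set_option maxHeartbeats 1600000 in
/-- For every `t ≠ 0`, the deformation of the diamond Lie algebra `𝔡` along the
2-cocycle `φ₂(e₂,e₃) = e₁`, `φ₂(e₃,e₂) = -e₁` is isomorphic to `sl(2,ℂ) ⊕ ℂ`. -/
theorem diamond_deformation_iso_sl2_plus_C :
    ∀ t : ℂ, t ≠ 0 →
      ∃ T : (Fin 4 → ℂ) ≃ₗ[ℂ] (Fin 4 → ℂ),
        ∀ x y : Fin 4 → ℂ, T (diamondDeformed2 t x y) = sl2PlusCBracket (T x) (T y) := by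
  intro t ht
  refine ⟨{ toFun := fun x => ![-(t/2) * (x 1 + Complex.I * x 2),
                                (x 1 - Complex.I * x 2) / 2,
                                Complex.I * x 0 / 2,
                                -(x 0) / t + x 3],
            invFun := fun y => ![-2 * Complex.I * y 2,
                                 y 1 - y 0 / t,
                                 Complex.I * (y 0 / t + y 1),
                                 y 3 - 2 * Complex.I * y 2 / t],
            map_add' := ?_, map_smul' := ?_, left_inv := ?_, right_inv := ?_ }, ?_⟩
  · intro x y
    funext i
    fin_cases i <;> simp [Pi.add_apply] <;> ring
  · intro c x
    funext i
    fin_cases i <;> simp [Pi.smul_apply, smul_eq_mul] <;> ring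
  · intro x
    funext i
    fin_cases i <;>
      simp only [Matrix.cons_val_zero, Matrix.cons_val_one, Matrix.head_cons,
        Matrix.cons_val_two, Matrix.tail_cons, Matrix.cons_val_three,
          Fin.isValue, Matrix.cons_val, LinearMap.coe_mk, AddHom.coe_mk] <;>
      field_simp <;> linear_combination (norm := ring_nf) ?_ <;> ring_nf <;>
      simp [Complex.I_sq] <;> field_simp <;> ring
  · intro x
    funext i
    fin_cases i <;>
      simp only [Matrix.cons_val_zero, Matrix.cons_val_one, Matrix.head_cons,
        Matrix.cons_val_two, Matrix.tail_cons, Matrix.cons_val_three,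
          Fin.isValue, Matrix.cons_val, LinearMap.coe_mk, AddHom.coe_mk] <;>
      field_simp <;> linear_combination (norm := ring_nf) ?_ <;> ring_nf <;>
      simp [Complex.I_sq] <;> field_simp <;> ring
  · intro x y
    funext i
    fin_cases i <;>
      simp only [diamondDeformed2, sl2PlusCBracket, LinearEquiv.coe_mk,
        Matrix.cons_val_zero, Matrix.cons_val_one, Matrix.head_cons,
        Matrix.cons_val_two, Matrix.tail_cons, Matrix.cons_val_three,
          Fin.isValue, Matrix.cons_val, LinearMap.coe_mk, AddHom.coe_mk] <;>
      field_simp <;> linear_combination (norm := ring_nf) ?_ <;> ring_nf <;>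
      simp [Complex.I_sq] <;> ring
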